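/- Let U be the algebra of affiliated operators of a finite von Neumann algebra A, M a finitely generated U-module, and K a submodule of M. Then the bnd-closure cl_bnd(K) is a direct summand of M and M/cl_bnd(K) is finitely generated projective; moreover dim_U(K) = dim_U(cl_bnd(K)). -/

import Mathlib

open scoped ENNReal

/-- An abstraction of the pair `A ⊆ U = U(A)`, where `A` is a finite von Neumann algebra
(with a fixed normal faithful trace) and `U` is its algebra of affiliated operators,
together with the trace-induced dimension functions on `A`- and on `U`-modules.
The fields record the facts used in the paper: `U` is the classical ring of quotients
of `A`, `U` is von Neumann regular and self-injective, and the dimensions are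
isomorphism-invariant, additive on short exact sequences, continuous with respect to
suprema over finitely generated projective submodules, and faithful on finitely
generated projective modules. -/
structure AffiliatedOperatorsSetup (A U : Type) [Ring A] [Ring U] where
  /-- the inclusion of `A` into `U` -/
  incl : A →+* U
  incl_injective : Function.Injective incl
  /-- `U` is von Neumann regular -/
  regular : ∀ u : U, ∃ x : U, u * x * u = u
  /-- `U` is self-injective -/
  selfInjective : Module.Injective U U
  /-- every element of `U` is a left fraction `s⁻¹ a` with `a, s ∈ A`, `s` regular:
  `U = Q_cl(A)` -/
  fraction : ∀ u : U, ∃ a s : A,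
      (∀ b : A, s * b = 0 → b = 0) ∧ (∀ b : A, b * s = 0 → b = 0) ∧
      incl s * u = incl a
  /-- regular elements of `A` become invertible in `U` -/
  regularUnit : ∀ s : A, (∀ b : A, s * b = 0 → b = 0) → (∀ b : A, b * s = 0 → b = 0) →
      IsUnit (incl s)
  /-- the trace-induced dimension of an `A`-module -/
  dimA : ∀ (M : Type) [AddCommGroup M] [Module A M], ℝ≥0∞
  /-- the trace-induced dimension of a `U`-module -/
  dimU : ∀ (M : Type) [AddCommGroup M] [Module U M], ℝ≥0∞
  dimA_congr : ∀ (M N : Type) [AddCommGroup M] [Module A M] [AddCommGroup N] [Module A N],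
      (M ≃ₗ[A] N) → dimA M = dimA N
  dimU_congr : ∀ (M N : Type) [AddCommGroup M] [Module U M] [AddCommGroup N] [Module U N],
      (M ≃ₗ[U] N) → dimU M = dimU N
  dimA_add : ∀ (M : Type) [AddCommGroup M] [Module A M] (N : Submodule A M),
      dimA M = dimA ↥N + dimA (M ⧸ N)
  dimU_add : ∀ (M : Type) [AddCommGroup M] [Module U M] (N : Submodule U M),
      dimU M = dimU ↥N + dimU (M ⧸ N)
  dimA_sup : ∀ (M : Type) [AddCommGroup M] [Module A M],
      dimA M = ⨆ (N : Submodule A M) (_ : N.FG ∧ Module.Projective A ↥N), dimA ↥N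
  dimU_sup : ∀ (M : Type) [AddCommGroup M] [Module U M],
      dimU M = ⨆ (N : Submodule U M) (_ : N.FG ∧ Module.Projective U ↥N), dimU ↥N
  dimA_faithful : ∀ (M : Type) [AddCommGroup M] [Module A M],
      Module.Finite A M → Module.Projective A M → (dimA M = 0 ↔ Subsingleton M)
  dimU_faithful : ∀ (M : Type) [AddCommGroup M] [Module U M],
      Module.Finite U M → Module.Projective U M → (dimU M = 0 ↔ Subsingleton M)

/-- The closure `cl_bnd(K)` of a submodule `K` of `M` in the torsion theory cogenerated by
the ring `U`: `{x ∈ M | f x = 0 for all f ∈ Hom_U(M,U) with K ⊆ ker f}`. -/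
def bndClosure (U : Type) [Ring U] {M : Type} [AddCommGroup M] [Module U M]
    (K : Submodule U M) : Submodule U M :=
  sInf {N : Submodule U M | ∃ f : M →ₗ[U] U, K ≤ LinearMap.ker f ∧ N = LinearMap.ker f}
section Aux

variable {U : Type} [Ring U]

theorem aux_regular_nonsingular (reg : ∀ u : U, ∃ x : U, u * x * u = u) (y : U)
    (h : ∀ v : U, v ≠ 0 → ∃ u : U, u * v ≠ 0 ∧ u * v * y = 0) : y = 0 := by
  obtain ⟨z, hz⟩ := reg y
  by_cases he : y * z = 0
  · calc y = y * z * y := hz.symm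
      _ = 0 := by rw [he, zero_mul]
  · obtain ⟨u, hu1, hu2⟩ := h (y * z) he
    exfalso
    apply hu1
    have hidem : y * z * (y * z) = y * z := by
      rw [show y * z * (y * z) = y * z * y * z from (mul_assoc _ y z).symm, hz]
    have h0 : u * (y * z) * (y * z) = 0 := by
      rw [show u * (y * z) * (y * z) = u * (y * z) * y * z from (mul_assoc _ y z).symm,
        hu2, zero_mul]
    calc u * (y * z) = u * (y * z) * (y * z) := by rw [mul_assoc, hidem]
      _ = 0 := h0

theorem aux_injective_pi (inj : Module.Injective U U) (n : ℕ) :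
    Module.Injective U (Fin n → U) := by
  constructor
  intro X Y _ _ _ _ f hf g
  choose h hh using fun i : Fin n => inj.out f hf ((LinearMap.proj i).comp g)
  exact ⟨LinearMap.pi h, fun x => funext fun i => by simpa using hh i x⟩

/-- Key lemma: a submodule of `Uⁿ` which is an intersection of kernels of functionals
is a direct summand, when `U` is von Neumann regular and self-injective. -/
theorem aux_exists_isCompl (reg : ∀ u : U, ∃ x : U, u * x * u = u)
    (inj : Module.Injective U U) {n : ℕ} (L : Submodule U (Fin n → U))
    (hLsep : ∀ x : Fin n → U, x ∉ L →
      ∃ g : (Fin n → U) →ₗ[U] U, L ≤ LinearMap.ker g ∧ g x ≠ 0) :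
    ∃ C : Submodule U (Fin n → U), IsCompl L C := by
  classical
  -- Zorn: a maximal submodule disjoint from `L`
  obtain ⟨C, -, hCmax⟩ := zorn_le_nonempty₀ {C : Submodule U (Fin n → U) | Disjoint L C}
    (fun c hcs hchain y hy => by
      refine ⟨sSup c, ?_, fun z hz => le_sSup hz⟩
      refine Submodule.disjoint_def.mpr fun x hxL hxS => ?_
      obtain ⟨D, hDc, hxD⟩ := (Submodule.mem_sSup_of_directed ⟨y, hy⟩ hchain.directedOn).mp hxS
      exact Submodule.disjoint_def.mp (hcs hDc) x hxL hxD) ⊥ disjoint_bot_right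
  have hCs : Disjoint L C := hCmax.1
  -- essentiality consequence of maximality
  have hCess : ∀ x : Fin n → U, x ∉ C → ∃ (u : U) (l : Fin n → U),
      l ∈ L ∧ l ≠ 0 ∧ l - u • x ∈ C := by
    intro x hx
    have hnd : ¬ Disjoint L (C ⊔ Submodule.span U {x}) := by
      intro hd
      exact hx (hCmax.2 hd le_sup_left
        (Submodule.mem_sup_right (Submodule.mem_span_singleton_self x)))
    rw [Submodule.disjoint_def] at hnd
    push_neg at hnd
    obtain ⟨l, hlL, hlC', hl0⟩ := hnd
    obtain ⟨c, hcC, yy, hyy, hsum⟩ := Submodule.mem_sup.mp hlC'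
    obtain ⟨u, rfl⟩ := Submodule.mem_span_singleton.mp hyy
    refine ⟨u, l, hlL, hl0, ?_⟩
    have : l - u • x = c := by rw [← hsum]; abel
    rw [this]; exact hcC
  -- extend the identity of `L` along `L → Uⁿ/C` using injectivity
  have hρinj : Function.Injective (C.mkQ.comp L.subtype) := by
    rw [← LinearMap.ker_eq_bot, LinearMap.ker_comp, Submodule.ker_mkQ, Submodule.eq_bot_iff]
    rintro ⟨x, hxL⟩ hx
    exact Subtype.ext (Submodule.disjoint_def.mp hCs x hxL hx)
  obtain ⟨ψ, hψ⟩ := (aux_injective_pi inj n).out (C.mkQ.comp L.subtype) hρinj L.subtype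
  have hψL : ∀ l, (hl : l ∈ L) → ψ (C.mkQ l) = l := fun l hl => hψ ⟨l, hl⟩
  -- ψ is injective
  have hψ0 : ∀ z, ψ z = 0 → z = 0 := by
    intro z hz
    by_contra hz0
    obtain ⟨x, rfl⟩ := Submodule.mkQ_surjective C z
    have hxC : x ∉ C := fun h => hz0 ((Submodule.Quotient.mk_eq_zero C).mpr h)
    obtain ⟨u, l, hlL, hl0, hc⟩ := hCess x hxC
    have h1 : C.mkQ l = u • C.mkQ x := by
      rw [← map_smul]
      exact (Submodule.Quotient.eq C).mpr hc
    have h2 : l = ψ (C.mkQ l) := (hψL l hlL).symm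
    rw [h1, map_smul, hz, smul_zero] at h2
    exact hl0 h2
  -- the range of ψ is contained in L
  have hrange : ∀ z, ψ z ∈ L := by
    intro z
    by_contra hzL
    obtain ⟨g, hgL, hgz⟩ := hLsep _ hzL
    refine hgz (aux_regular_nonsingular reg _ fun v hv => ?_)
    by_cases hvz : v • z = 0
    · refine ⟨1, by simpa using hv, ?_⟩
      have h1 : g (ψ (v • z)) = 0 := by rw [hvz, map_zero, map_zero]
      rw [map_smul, map_smul, smul_eq_mul] at h1
      rw [one_mul]
      exact h1
    · obtain ⟨x, hx⟩ := Submodule.mkQ_surjective C (v • z)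
      have hxC : x ∉ C := fun h => hvz (by
        rw [← hx]; exact (Submodule.Quotient.mk_eq_zero C).mpr h)
      obtain ⟨u, l, hlL, hl0, hc⟩ := hCess x hxC
      have h1 : C.mkQ l = (u * v) • z := by
        rw [show (u * v) • z = u • (v • z) from mul_smul u v z, ← hx, ← map_smul]
        exact (Submodule.Quotient.eq C).mpr hc
      have h2 : l = ψ (C.mkQ l) := (hψL l hlL).symm
      rw [h1, map_smul] at h2
      refine ⟨u, ?_, ?_⟩
      · intro huv
        rw [huv, zero_smul] at h2
        exact hl0 h2
      · have h3 : g l = (u * v) * g (ψ z) := by rw [h2, map_smul, smul_eq_mul]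
        rw [← h3]
        exact LinearMap.mem_ker.mp (hgL hlL)
  refine ⟨C, ⟨hCs, ?_⟩⟩
  rw [codisjoint_iff, eq_top_iff]
  intro x _
  have hp : ψ (C.mkQ x) ∈ L := hrange _
  have hxp : x - ψ (C.mkQ x) ∈ C := by
    have h1 : ψ (C.mkQ (x - ψ (C.mkQ x))) = 0 := by
      rw [map_sub, map_sub, hψL _ hp, sub_self]
    exact (Submodule.Quotient.mk_eq_zero C).mp (hψ0 _ h1)
  exact Submodule.mem_sup.mpr ⟨ψ (C.mkQ x), hp, x - ψ (C.mkQ x), hxp, by abel⟩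

/-- Quotients by complemented submodules of projective modules are projective. -/
theorem aux_projective_quotient {E : Type} [AddCommGroup E] [Module U E]
    [Module.Projective U E] {L C : Submodule U E} (h : IsCompl L C) :
    Module.Projective U (E ⧸ L) := by
  refine Module.Projective.of_split
    (C.subtype.comp (Submodule.quotientEquivOfIsCompl L C h).toLinearMap) L.mkQ ?_
  refine LinearMap.ext fun z => ?_
  rw [LinearMap.comp_apply, LinearMap.comp_apply, LinearEquiv.coe_coe, Submodule.coe_subtype,
    Submodule.mkQ_apply, LinearMap.id_apply,
    ← Submodule.quotientEquivOfIsCompl_symm_apply L C h, LinearEquiv.symm_apply_apply]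

end Aux

/-- let `U` be the algebra of affiliated operators of a finite von Neumann
algebra `A`, `M` a finitely generated `U`-module, and `K` a submodule of `M`. Then the
bnd-closure `cl_bnd(K)` is a direct summand of `M` and `M/cl_bnd(K)` is finitely
generated projective; moreover `dim_U(K) = dim_U(cl_bnd(K))`. -/
theorem bndClosure_direct_summand_and_dim (A U : Type) [Ring A] [Ring U]
    (S : AffiliatedOperatorsSetup A U)
    (M : Type) [AddCommGroup M] [Module U M] [Module.Finite U M] (K : Submodule U M) :
    (∃ q : Submodule U M, IsCompl (bndClosure U K) q) ∧
      Module.Finite U (M ⧸ bndClosure U K) ∧ Module.Projective U (M ⧸ bndClosure U K) ∧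
      S.dimU ↥K = S.dimU ↥(bndClosure U K) := by
  classical
  set N := bndClosure U K with hNdef
  have hKN : K ≤ N := le_sInf (by rintro J ⟨f, hKf, rfl⟩; exact hKf)
  have hNle : ∀ f : M →ₗ[U] U, K ≤ LinearMap.ker f → N ≤ LinearMap.ker f :=
    fun f hf => sInf_le ⟨f, hf, rfl⟩
  have hsep : ∀ m : M, m ∉ N → ∃ f : M →ₗ[U] U, K ≤ LinearMap.ker f ∧ f m ≠ 0 := by
    intro m hm
    by_contra hcon
    push_neg at hcon
    exact hm (Submodule.mem_sInf.mpr
      (by rintro J ⟨f, hKf, rfl⟩; exact LinearMap.mem_ker.mpr (hcon f hKf)))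
  obtain ⟨n, π, hπ⟩ := Module.Finite.exists_fin' U M
  set π' : (Fin n → U) →ₗ[U] M ⧸ N := N.mkQ.comp π with hπ'def
  have hπ's : Function.Surjective π' := by
    intro y
    obtain ⟨m, rfl⟩ := Submodule.mkQ_surjective N y
    obtain ⟨x, rfl⟩ := hπ m
    exact ⟨x, rfl⟩
  set L := LinearMap.ker π' with hLdef
  have hLsep : ∀ x : Fin n → U, x ∉ L →
      ∃ g : (Fin n → U) →ₗ[U] U, L ≤ LinearMap.ker g ∧ g x ≠ 0 := by
    intro x hx
    have hπx : π x ∉ N := by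
      intro h
      exact hx (LinearMap.mem_ker.mpr ((Submodule.Quotient.mk_eq_zero N).mpr h))
    obtain ⟨f, hKf, hfm⟩ := hsep _ hπx
    refine ⟨f.comp π, ?_, hfm⟩
    intro l hl
    have hπl : π l ∈ N :=
      (Submodule.Quotient.mk_eq_zero N).mp (LinearMap.mem_ker.mp hl)
    exact LinearMap.mem_ker.mpr (LinearMap.mem_ker.mp (hNle f hKf hπl))
  obtain ⟨C, hcompl⟩ := aux_exists_isCompl S.regular S.selfInjective L hLsep
  have hquotproj : Module.Projective U ((Fin n → U) ⧸ L) := aux_projective_quotient hcompl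
  have ePL : ((Fin n → U) ⧸ L) ≃ₗ[U] M ⧸ N := π'.quotKerEquivOfSurjective hπ's
  have hPproj : Module.Projective U (M ⧸ N) := Module.Projective.of_equiv ePL
  have hPfin : Module.Finite U (M ⧸ N) :=
    Module.Finite.of_surjective N.mkQ (Submodule.mkQ_surjective N)
  obtain ⟨σ, hσ⟩ :=
    Module.projective_lifting_property N.mkQ LinearMap.id (Submodule.mkQ_surjective N)
  have hσ' : ∀ z, N.mkQ (σ z) = z := fun z => by
    have := LinearMap.congr_fun hσ z; simpa using this
  refine ⟨⟨LinearMap.range σ, ⟨?_, ?_⟩⟩, hPfin, hPproj, ?_⟩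
  · refine Submodule.disjoint_def.mpr fun x hxN hxR => ?_
    obtain ⟨z, rfl⟩ := LinearMap.mem_range.mp hxR
    have hz : z = 0 := by
      rw [← hσ' z]
      exact (Submodule.Quotient.mk_eq_zero N).mpr hxN
    rw [hz, map_zero]
  · rw [codisjoint_iff, eq_top_iff]
    intro x _
    have hmem : x - σ (N.mkQ x) ∈ N := by
      have h0 : N.mkQ (x - σ (N.mkQ x)) = 0 := by rw [map_sub, hσ', sub_self]
      exact (Submodule.Quotient.mk_eq_zero N).mp h0
    exact Submodule.mem_sup.mpr
      ⟨x - σ (N.mkQ x), hmem, σ (N.mkQ x), LinearMap.mem_range_self _ _, by abel⟩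
  · -- dimension statement
    have h2 : S.dimU ↥(K.comap N.subtype) = S.dimU ↥K :=
      S.dimU_congr _ _ (Submodule.comapSubtypeEquivOfLe hKN)
    set φ : ↥N →ₗ[U] M ⧸ K := K.mkQ.comp N.subtype with hφdef
    have hkerφ : LinearMap.ker φ = K.comap N.subtype := by
      rw [hφdef, LinearMap.ker_comp, Submodule.ker_mkQ]
    have e2 : (↥N ⧸ K.comap N.subtype) ≃ₗ[U] ↥(LinearMap.range φ) :=
      (Submodule.quotEquivOfEq _ _ hkerφ.symm).trans φ.quotKerEquivRange
    have hzero : S.dimU ↥(LinearMap.range φ) = 0 := by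
      rw [S.dimU_sup ↥(LinearMap.range φ)]
      refine le_antisymm (iSup_le fun Q => iSup_le fun hQ => ?_) zero_le
      haveI hQfin : Module.Finite U ↥Q := Module.Finite.iff_fg.mpr hQ.1
      haveI hQproj : Module.Projective U ↥Q := hQ.2
      have hQ0 : ∀ x : ↥(LinearMap.range φ), x ∈ Q → x = 0 := by
        intro x hx
        by_contra hx0
        obtain ⟨m, τ, hτ⟩ := Module.Finite.exists_fin' U ↥Q
        obtain ⟨s₀, hs₀⟩ := Module.projective_lifting_property τ LinearMap.id hτ
        set q₀ : ↥Q := ⟨x, hx⟩ with hq₀def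
        have hq₀ : q₀ ≠ 0 := fun h => hx0 (by
          have := congrArg (Subtype.val) h
          simpa [hq₀def] using this)
        have hs₀q : s₀ q₀ ≠ 0 := fun h => hq₀ (by
          have h1 := LinearMap.congr_fun hs₀ q₀
          simp only [LinearMap.comp_apply, LinearMap.id_apply] at h1
          rw [← h1, h, map_zero])
        obtain ⟨i, hi⟩ : ∃ i, s₀ q₀ i ≠ 0 := by
          by_contra hall; push_neg at hall; exact hs₀q (funext hall)
        set h₀ : ↥Q →ₗ[U] U := (LinearMap.proj i).comp s₀ with hh₀def
        set ι : ↥Q →ₗ[U] M ⧸ K := (LinearMap.range φ).subtype.comp Q.subtype with hιdef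
        have hιinj : Function.Injective ι := by
          intro a b hab
          apply Subtype.ext; apply Subtype.ext
          exact hab
        obtain ⟨g, hg⟩ := S.selfInjective.out (X := ↥Q) (Y := M ⧸ K) ι hιinj h₀
        have hKg : K ≤ LinearMap.ker (g.comp K.mkQ) := by
          intro k hk
          have h1 : K.mkQ k = 0 := (Submodule.Quotient.mk_eq_zero K).mpr hk
          exact LinearMap.mem_ker.mpr (by rw [LinearMap.comp_apply, h1, map_zero])
        have hNg := hNle _ hKg
        obtain ⟨c, hc⟩ := LinearMap.mem_range.mp (q₀ : ↥(LinearMap.range φ)).2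
        have hgz : g (ι q₀) = 0 := by
          have hcN : (c : M) ∈ N := c.2
          have h1 : ι q₀ = K.mkQ (c : M) := hc.symm
          rw [h1]
          exact LinearMap.mem_ker.mp (hNg hcN)
        rw [hg q₀] at hgz
        exact hi hgz
      haveI hQsub : Subsingleton ↥Q :=
        ⟨fun a b => Subtype.ext (by rw [hQ0 _ a.2, hQ0 _ b.2])⟩
      exact le_of_eq ((S.dimU_faithful ↥Q hQfin hQproj).mpr hQsub)
    rw [S.dimU_add ↥N (K.comap N.subtype), S.dimU_congr _ _ e2, hzero, add_zero, h2]
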